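/- Existence of simple proofs: given finite sets of terms T1 ⊆ T2 ⊆ ... ⊆ Tn, if there is a proof of Ti ⊢ u in the Dolev-Yao deduction system, then there is a simple proof of Ti ⊢ u. -/

import Mathlib

open scoped Classical

/-- Terms built from names, variables, pairing, symmetric/asymmetric encryption,
signatures and private keys. -/
inductive Tm where
  | var : ℕ → Tm
  | name : ℕ → Tm
  | pair : Tm → Tm → Tm
  | enc : Tm → Tm → Tm
  | enca : Tm → Tm → Tm
  | sign : Tm → Tm → Tm
  | priv : Tm → Tm
deriving DecidableEq

namespace Tm

/-- The variables of a term. -/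
def vars : Tm → Finset ℕ
  | var x => {x}
  | name _ => ∅
  | pair s t => s.vars ∪ t.vars
  | enc s t => s.vars ∪ t.vars
  | enca s t => s.vars ∪ t.vars
  | sign s t => s.vars ∪ t.vars
  | priv t => t.vars

/-- The subterms of a term. -/
def subterms : Tm → Finset Tm
  | var x => {var x}
  | name a => {name a}
  | pair s t => insert (pair s t) (s.subterms ∪ t.subterms)
  | enc s t => insert (enc s t) (s.subterms ∪ t.subterms)
  | enca s t => insert (enca s t) (s.subterms ∪ t.subterms)
  | sign s t => insert (sign s t) (s.subterms ∪ t.subterms)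
  | priv t => insert (priv t) t.subterms

/-- A term is a variable. -/
def IsVar : Tm → Prop
  | var _ => True
  | _ => False

end Tm

/-- The Dolev-Yao deduction relation `T ⊢ u`. -/
inductive Deduce : Finset Tm → Tm → Prop where
  | ax {T u} : u ∈ T → Deduce T u
  | pairI {T x y} : Deduce T x → Deduce T y → Deduce T (Tm.pair x y)
  | encI {T x y} : Deduce T x → Deduce T y → Deduce T (Tm.enc x y)
  | encaI {T x y} : Deduce T x → Deduce T y → Deduce T (Tm.enca x y)
  | signI {T x y} : Deduce T x → Deduce T y → Deduce T (Tm.sign x y)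
  | encE {T x y} : Deduce T (Tm.enc x y) → Deduce T y → Deduce T x
  | encaE {T x y} : Deduce T (Tm.enca x y) → Deduce T (Tm.priv y) → Deduce T x
  | fstE {T x y} : Deduce T (Tm.pair x y) → Deduce T x
  | sndE {T x y} : Deduce T (Tm.pair x y) → Deduce T y

/-- Substitutions. -/
def Subst := ℕ → Tm

/-- Applying a substitution to a term. -/
def Tm.subst (σ : Subst) : Tm → Tm
  | .var x => σ x
  | .name a => .name a
  | .pair s t => .pair (s.subst σ) (t.subst σ)
  | .enc s t => .enc (s.subst σ) (t.subst σ)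
  | .enca s t => .enca (s.subst σ) (t.subst σ)
  | .sign s t => .sign (s.subst σ) (t.subst σ)
  | .priv t => .priv (t.subst σ)

/-- The identity substitution. -/
def idSubst : Subst := Tm.var

/-- Composition of substitutions: `σ.comp τ` applies `σ` first, then `τ`. -/
def Subst.comp (σ τ : Subst) : Subst := fun x => (σ x).subst τ

/-- The variables of a finite set of terms. -/
def setVars (T : Finset Tm) : Finset ℕ := T.sup Tm.vars

/-- The subterms of a finite set of terms. -/
def stSet (T : Finset Tm) : Finset Tm := T.sup Tm.subterms

/-- A deducibility constraint `T ⊩ u`: a (nonempty) finite set of terms and a term. -/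
abbrev Cst := Finset Tm × Tm

/-- Applying a substitution to a constraint. -/
def conSubst (σ : Subst) (c : Cst) : Cst := (c.1.image (Tm.subst σ), c.2.subst σ)

/-- Applying a substitution to a constraint system. -/
def csSubst (σ : Subst) (S : Finset Cst) : Finset Cst := S.image (conSubst σ)

/-- The variables of a constraint system. -/
def sysVars (C : Finset Cst) : Finset ℕ := C.sup (fun c => setVars c.1 ∪ c.2.vars)

/-- The set `{x | (T' ⊩ x) ∈ S, T' ⊊ T}` of variables (as terms) occurring as
right-hand sides of constraints of `S` whose left-hand side is strictly contained in `T`. -/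
noncomputable def extraVars (S : Finset Cst) (T : Finset Tm) : Finset Tm :=
  (S.filter (fun c => c.1 ⊂ T ∧ c.2.IsVar)).image Prod.snd

/-- `C` is a deducibility constraint system: left-hand sides are nonempty,
totally ordered by inclusion, and every variable of a left-hand side `T` occurs in
the right-hand side of a constraint whose left-hand side is minimal among those whose
right-hand side contains the variable, and strictly included in `T`. -/
def IsCS (C : Finset Cst) : Prop :=
  (∀ c ∈ C, c.1.Nonempty) ∧
  (∀ c ∈ C, ∀ c' ∈ C, c.1 ⊆ c'.1 ∨ c'.1 ⊆ c.1) ∧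
  (∀ c ∈ C, ∀ x ∈ setVars c.1,
    ∃ c' ∈ C, x ∈ c'.2.vars ∧ c'.1 ⊂ c.1 ∧
      ∀ c'' ∈ C, x ∈ c''.2.vars → c'.1 ⊆ c''.1)

/-- A solution of a constraint system: a ground substitution whose domain is `V(C)`
such that `Tθ ⊢ uθ` for every constraint `(T ⊩ u) ∈ C`. -/
def IsSolution (θ : Subst) (C : Finset Cst) : Prop :=
  (∀ x ∈ sysVars C, (θ x).vars = ∅) ∧
  (∀ x, x ∉ sysVars C → θ x = Tm.var x) ∧
  (∀ c ∈ C, Deduce (c.1.image (Tm.subst θ)) (c.2.subst θ))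

/-- A (non-`⊥`) constraint system is solved if all right-hand sides are variables. -/
def Solved (C : Finset Cst) : Prop := ∀ c ∈ C, c.2.IsVar

/-- `σ` is a most general unifier of `t` and `u`. -/
def IsMGU (σ : Subst) (t u : Tm) : Prop :=
  t.subst σ = u.subst σ ∧
  (∀ x, x ∉ t.vars ∪ u.vars → σ x = Tm.var x) ∧
  (∀ x, (σ x).vars ⊆ t.vars ∪ u.vars) ∧
  (∀ δ : Subst, t.subst δ = u.subst δ → ∃ ρ : Subst, ∀ x, δ x = (σ x).subst ρ)

/-- The binary constructors `pair`, `enc`, `enca`, `sign`. -/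
inductive BinOp where
  | pair | enc | enca | sign

def BinOp.app : BinOp → Tm → Tm → Tm
  | .pair => Tm.pair
  | .enc => Tm.enc
  | .enca => Tm.enca
  | .sign => Tm.sign

/-- One step of simplification `C ⇝_σ C'` (result `none` represents `⊥`),
given by the rules R1, R2, R3, R3', R4, Rf. -/
inductive Step : Finset Cst → Subst → Option (Finset Cst) → Prop where
  | r1 {S : Finset Cst} {T : Finset Tm} {u : Tm} :
      (T, u) ∈ S →
      Deduce (T ∪ extraVars (S.erase (T, u)) T) u →
      Step S idSubst (some (S.erase (T, u)))
  | r2 {S : Finset Cst} {T : Finset Tm} {u t : Tm} {σ : Subst} :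
      (T, u) ∈ S → t ∈ stSet T → ¬ t.IsVar → ¬ u.IsVar → t ≠ u →
      IsMGU σ t u →
      Step S σ (some (csSubst σ S))
  | r3 {S : Finset Cst} {T : Finset Tm} {u t₁ t₂ : Tm} {σ : Subst} :
      (T, u) ∈ S → t₁ ∈ stSet T → t₂ ∈ stSet T → ¬ t₁.IsVar → ¬ t₂.IsVar →
      t₁ ≠ t₂ → IsMGU σ t₁ t₂ →
      Step S σ (some (csSubst σ S))
  | r3' {S : Finset Cst} {T : Finset Tm} {u t₁ t₂ t₃ : Tm} {σ : Subst} :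
      (T, u) ∈ S → Tm.enca t₁ t₂ ∈ stSet T → Tm.priv t₃ ∈ stSet T →
      t₂ ≠ t₃ → (t₂.IsVar ∨ t₃.IsVar) → IsMGU σ t₂ t₃ →
      Step S σ (some (csSubst σ S))
  | r4 {S : Finset Cst} {T : Finset Tm} {u : Tm} :
      (T, u) ∈ S → setVars T ∪ u.vars = ∅ → ¬ Deduce T u →
      Step S idSubst none
  | rf {S : Finset Cst} {T : Finset Tm} {u v : Tm} (b : BinOp) :
      (T, b.app u v) ∈ S →
      Step S idSubst (some (insert (T, u) (insert (T, v) (S.erase (T, b.app u v)))))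

/-- Sequences of simplification steps `C ⇝*_σ C'`, composing the substitutions. -/
inductive Steps : Finset Cst → Subst → Option (Finset Cst) → Prop where
  | refl (S) : Steps S idSubst (some S)
  | tail {S : Finset Cst} {σ : Subst} {S' : Finset Cst} {τ : Subst} {R} :
      Steps S σ (some S') → Step S' τ R → Steps S (σ.comp τ) R

/-- A security property, identified with its set of solutions (ground substitutions
making it true); `θ` solves `φσ` iff `σθ` solves `φ`. -/
def SecProp := Subst → Prop

/-- The instance `φσ` of a security property `φ` by a substitution `σ`. -/
def SecProp.subst (φ : SecProp) (σ : Subst) : SecProp := fun θ => φ (σ.comp θ)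

/-- `θ` is an attack for `φ` and `C` if it is a solution of both. -/
def IsAttack (θ : Subst) (C : Finset Cst) (φ : SecProp) : Prop :=
  IsSolution θ C ∧ φ θ

/-- One memorizing simplification step: `C;D ⇒_σ (C' \ D); (D ∪ (C \ C'))`. -/
inductive MStep : Finset Cst × Finset Cst → Subst → Finset Cst × Finset Cst → Prop where
  | mk {C D C' : Finset Cst} {σ : Subst} :
      Step C σ (some C') → MStep (C, D) σ (C' \ D, D ∪ (C \ C'))

/-- Sequences of memorizing simplification steps, composing the substitutions. -/
inductive MSteps : Finset Cst × Finset Cst → Subst → Finset Cst × Finset Cst → Prop where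
  | refl (P) : MSteps P idSubst P
  | tail {P : Finset Cst × Finset Cst} {σ : Subst} {Q : Finset Cst × Finset Cst}
      {τ : Subst} {R : Finset Cst × Finset Cst} :
      MSteps P σ Q → MStep Q τ R → MSteps P (σ.comp τ) R

/-- Proof trees for the Dolev-Yao deduction system (the left-hand side `T` is
the same in all sequents of a proof). -/
inductive PTree (T : Finset Tm) : Tm → Type where
  | ax {u} : u ∈ T → PTree T u
  | pairI {x y} : PTree T x → PTree T y → PTree T (Tm.pair x y)
  | encI {x y} : PTree T x → PTree T y → PTree T (Tm.enc x y)
  | encaI {x y} : PTree T x → PTree T y → PTree T (Tm.enca x y)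
  | signI {x y} : PTree T x → PTree T y → PTree T (Tm.sign x y)
  | encE {x y} : PTree T (Tm.enc x y) → PTree T y → PTree T x
  | encaE {x y} : PTree T (Tm.enca x y) → PTree T (Tm.priv y) → PTree T x
  | fstE {x y} : PTree T (Tm.pair x y) → PTree T x
  | sndE {x y} : PTree T (Tm.pair x y) → PTree T y

/-- The immediate subproof (child) relation on proof trees. -/
inductive Child (T : Finset Tm) : (Σ u : Tm, PTree T u) → (Σ u : Tm, PTree T u) → Prop where
  | pairI₁ {x y} (p : PTree T x) (q : PTree T y) : Child T ⟨x, p⟩ ⟨Tm.pair x y, .pairI p q⟩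
  | pairI₂ {x y} (p : PTree T x) (q : PTree T y) : Child T ⟨y, q⟩ ⟨Tm.pair x y, .pairI p q⟩
  | encI₁ {x y} (p : PTree T x) (q : PTree T y) : Child T ⟨x, p⟩ ⟨Tm.enc x y, .encI p q⟩
  | encI₂ {x y} (p : PTree T x) (q : PTree T y) : Child T ⟨y, q⟩ ⟨Tm.enc x y, .encI p q⟩
  | encaI₁ {x y} (p : PTree T x) (q : PTree T y) : Child T ⟨x, p⟩ ⟨Tm.enca x y, .encaI p q⟩
  | encaI₂ {x y} (p : PTree T x) (q : PTree T y) : Child T ⟨y, q⟩ ⟨Tm.enca x y, .encaI p q⟩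
  | signI₁ {x y} (p : PTree T x) (q : PTree T y) : Child T ⟨x, p⟩ ⟨Tm.sign x y, .signI p q⟩
  | signI₂ {x y} (p : PTree T x) (q : PTree T y) : Child T ⟨y, q⟩ ⟨Tm.sign x y, .signI p q⟩
  | encE₁ {x y} (p : PTree T (Tm.enc x y)) (q : PTree T y) :
      Child T ⟨Tm.enc x y, p⟩ ⟨x, .encE p q⟩
  | encE₂ {x y} (p : PTree T (Tm.enc x y)) (q : PTree T y) :
      Child T ⟨y, q⟩ ⟨x, .encE p q⟩
  | encaE₁ {x y} (p : PTree T (Tm.enca x y)) (q : PTree T (Tm.priv y)) :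
      Child T ⟨Tm.enca x y, p⟩ ⟨x, .encaE p q⟩
  | encaE₂ {x y} (p : PTree T (Tm.enca x y)) (q : PTree T (Tm.priv y)) :
      Child T ⟨Tm.priv y, q⟩ ⟨x, .encaE p q⟩
  | fstE₁ {x y} (p : PTree T (Tm.pair x y)) : Child T ⟨Tm.pair x y, p⟩ ⟨x, .fstE p⟩
  | sndE₁ {x y} (p : PTree T (Tm.pair x y)) : Child T ⟨Tm.pair x y, p⟩ ⟨y, .sndE p⟩

/-- `a` is a subproof of `b`. -/
def Subproof {T : Finset Tm} (a b : Σ u : Tm, PTree T u) : Prop :=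
  Relation.ReflTransGen (Child T) a b

/-- `a` is a strict subproof of `b`. -/
def StrictSubproof {T : Finset Tm} (a b : Σ u : Tm, PTree T u) : Prop :=
  Relation.TransGen (Child T) a b

/-- The set of terms used at axiom leaves of a proof tree. -/
def axLeaves {T : Finset Tm} : ∀ {u : Tm}, PTree T u → Set Tm
  | u, .ax _ => {u}
  | _, .pairI p q => axLeaves p ∪ axLeaves q
  | _, .encI p q => axLeaves p ∪ axLeaves q
  | _, .encaI p q => axLeaves p ∪ axLeaves q
  | _, .signI p q => axLeaves p ∪ axLeaves q
  | _, .encE p q => axLeaves p ∪ axLeaves q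
  | _, .encaE p q => axLeaves p ∪ axLeaves q
  | _, .fstE p => axLeaves p
  | _, .sndE p => axLeaves p

/-- No label (conclusion) is repeated along any branch of `π`. -/
def NoRepeat {T : Finset Tm} {u : Tm} (π : PTree T u) : Prop :=
  ∀ a b : Σ v : Tm, PTree T v, Subproof a ⟨u, π⟩ → StrictSubproof b a → b.1 ≠ a.1

/-- The last rule of a proof tree is a decomposition (symmetric decryption,
asymmetric decryption, or a projection). -/
def lastIsDecomp {T : Finset Tm} : ∀ {u : Tm}, PTree T u → Prop
  | _, .encE _ _ => True
  | _, .encaE _ _ => True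
  | _, .fstE _ => True
  | _, .sndE _ => True
  | _, _ => False

/-- Left minimality of a subproof `a` of a proof over `Tc i`, relative to the
chain `Tc 0 ⊆ ... ⊆ Tc (n-1)`: whenever `Tc j ⊢ concl(a)` is derivable for some
`j < i`, replacing `Tc i` by `Tc j` in all left members still yields a proof,
i.e. all axiom leaves of `a` belong to `Tc j`. -/
def LeftMinimalChain {n : ℕ} (Tc : Fin n → Finset Tm) (i : Fin n)
    (a : Σ v : Tm, PTree (Tc i) v) : Prop :=
  ∀ j : Fin n, j < i → Deduce (Tc j) a.1 → axLeaves a.2 ⊆ ↑(Tc j)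

/-- A proof of `Tc i ⊢ u` is simple (w.r.t. the chain `Tc`) if all its subproofs
are left minimal and no label is repeated on any branch. -/
def SimpleChain {n : ℕ} (Tc : Fin n → Finset Tm) (i : Fin n) {u : Tm}
    (π : PTree (Tc i) u) : Prop :=
  (∀ a : Σ v : Tm, PTree (Tc i) v, Subproof a ⟨u, π⟩ → LeftMinimalChain Tc i a) ∧
    NoRepeat π

/-- Sized Dolev-Yao deduction. -/
inductive DN : ℕ → Finset Tm → Tm → Prop where
  | ax {T u} : u ∈ T → DN 0 T u
  | pairI {k l T x y} : DN k T x → DN l T y → DN (k+l+1) T (Tm.pair x y)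
  | encI {k l T x y} : DN k T x → DN l T y → DN (k+l+1) T (Tm.enc x y)
  | encaI {k l T x y} : DN k T x → DN l T y → DN (k+l+1) T (Tm.enca x y)
  | signI {k l T x y} : DN k T x → DN l T y → DN (k+l+1) T (Tm.sign x y)
  | encE {k l T x y} : DN k T (Tm.enc x y) → DN l T y → DN (k+l+1) T x
  | encaE {k l T x y} : DN k T (Tm.enca x y) → DN l T (Tm.priv y) → DN (k+l+1) T x
  | fstE {k T x y} : DN k T (Tm.pair x y) → DN (k+1) T x
  | sndE {k T x y} : DN k T (Tm.pair x y) → DN (k+1) T y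

lemma dn_deduce {k T u} (h : DN k T u) : Deduce T u := by
  induction h with
  | ax h => exact .ax h
  | pairI _ _ ih1 ih2 => exact .pairI ih1 ih2
  | encI _ _ ih1 ih2 => exact .encI ih1 ih2
  | encaI _ _ ih1 ih2 => exact .encaI ih1 ih2
  | signI _ _ ih1 ih2 => exact .signI ih1 ih2
  | encE _ _ ih1 ih2 => exact .encE ih1 ih2
  | encaE _ _ ih1 ih2 => exact .encaE ih1 ih2
  | fstE _ ih => exact .fstE ih
  | sndE _ ih => exact .sndE ih

lemma deduce_dn {T u} (h : Deduce T u) : ∃ k, DN k T u := by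
  induction h with
  | ax h => exact ⟨0, .ax h⟩
  | pairI _ _ ih1 ih2 => obtain ⟨k, h1⟩ := ih1; obtain ⟨l, h2⟩ := ih2; exact ⟨_, .pairI h1 h2⟩
  | encI _ _ ih1 ih2 => obtain ⟨k, h1⟩ := ih1; obtain ⟨l, h2⟩ := ih2; exact ⟨_, .encI h1 h2⟩
  | encaI _ _ ih1 ih2 => obtain ⟨k, h1⟩ := ih1; obtain ⟨l, h2⟩ := ih2; exact ⟨_, .encaI h1 h2⟩
  | signI _ _ ih1 ih2 => obtain ⟨k, h1⟩ := ih1; obtain ⟨l, h2⟩ := ih2; exact ⟨_, .signI h1 h2⟩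
  | encE _ _ ih1 ih2 => obtain ⟨k, h1⟩ := ih1; obtain ⟨l, h2⟩ := ih2; exact ⟨_, .encE h1 h2⟩
  | encaE _ _ ih1 ih2 => obtain ⟨k, h1⟩ := ih1; obtain ⟨l, h2⟩ := ih2; exact ⟨_, .encaE h1 h2⟩
  | fstE _ ih => obtain ⟨k, h1⟩ := ih; exact ⟨_, .fstE h1⟩
  | sndE _ ih => obtain ⟨k, h1⟩ := ih; exact ⟨_, .sndE h1⟩

/-- The minimal index `j` such that `Tc j ⊢ v` (or `i` if none). -/
noncomputable def mIdx {n : ℕ} (Tc : Fin n → Finset Tm) (i : Fin n) (v : Tm) : Fin n :=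
  if h : (Finset.univ.filter (fun j => Deduce (Tc j) v)).Nonempty then
    (Finset.univ.filter (fun j => Deduce (Tc j) v)).min' h else i

lemma mIdx_le {n : ℕ} (Tc : Fin n → Finset Tm) (i : Fin n) {v : Tm} {j : Fin n}
    (h : Deduce (Tc j) v) : mIdx Tc i v ≤ j := by
  have hne : (Finset.univ.filter (fun j => Deduce (Tc j) v)).Nonempty :=
    ⟨j, by simp [h]⟩
  rw [mIdx, dif_pos hne]
  exact Finset.min'_le _ _ (by simp [h])

lemma deduce_mIdx {n : ℕ} (Tc : Fin n → Finset Tm) (i : Fin n) {v : Tm} {j : Fin n}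
    (h : Deduce (Tc j) v) : Deduce (Tc (mIdx Tc i v)) v := by
  have hne : (Finset.univ.filter (fun j => Deduce (Tc j) v)).Nonempty :=
    ⟨j, by simp [h]⟩
  rw [mIdx, dif_pos hne]
  have := Finset.min'_mem _ hne
  simpa using this

/-- Minimal size of a proof of `Tc (mIdx Tc i v) ⊢ v`. -/
noncomputable def msz {n : ℕ} (Tc : Fin n → Finset Tm) (i : Fin n) (v : Tm) : ℕ :=
  if h : ∃ k, DN k (Tc (mIdx Tc i v)) v then Nat.find h else 0

/-- A measure on terms: (minimal index, minimal proof size at that index). -/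
noncomputable def meas {n : ℕ} (Tc : Fin n → Finset Tm) (i : Fin n) (v : Tm) : ℕ × ℕ :=
  ((mIdx Tc i v : ℕ), msz Tc i v)

/-- Lexicographic order on pairs. -/
def lt2 (p q : ℕ × ℕ) : Prop := p.1 < q.1 ∨ (p.1 = q.1 ∧ p.2 < q.2)

lemma lt2_trans {p q r : ℕ × ℕ} (h1 : lt2 p q) (h2 : lt2 q r) : lt2 p r := by
  rcases h1 with h1 | ⟨h1, h1'⟩ <;> rcases h2 with h2 | ⟨h2, h2'⟩ <;>
    simp_all [lt2] <;> omega

lemma lt2_ne {p q : ℕ × ℕ} (h : lt2 p q) : p ≠ q := by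
  rcases h with h | ⟨h, h'⟩ <;> intro he <;> subst he <;> omega

/-- Invariant: every node's measure dominates its children's, and axiom
leaves belong to the minimal layer of the conclusion. -/
def GoodT {n : ℕ} (Tc : Fin n → Finset Tm) (i : Fin n) :
    ∀ {v : Tm}, PTree (Tc i) v → Prop
  | v, .ax _ => v ∈ Tc (mIdx Tc i v)
  | _, @PTree.pairI _ x y p q =>
      lt2 (meas Tc i x) (meas Tc i (Tm.pair x y)) ∧
      lt2 (meas Tc i y) (meas Tc i (Tm.pair x y)) ∧ GoodT Tc i p ∧ GoodT Tc i q
  | _, @PTree.encI _ x y p q =>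
      lt2 (meas Tc i x) (meas Tc i (Tm.enc x y)) ∧
      lt2 (meas Tc i y) (meas Tc i (Tm.enc x y)) ∧ GoodT Tc i p ∧ GoodT Tc i q
  | _, @PTree.encaI _ x y p q =>
      lt2 (meas Tc i x) (meas Tc i (Tm.enca x y)) ∧
      lt2 (meas Tc i y) (meas Tc i (Tm.enca x y)) ∧ GoodT Tc i p ∧ GoodT Tc i q
  | _, @PTree.signI _ x y p q =>
      lt2 (meas Tc i x) (meas Tc i (Tm.sign x y)) ∧
      lt2 (meas Tc i y) (meas Tc i (Tm.sign x y)) ∧ GoodT Tc i p ∧ GoodT Tc i q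
  | _, @PTree.encE _ x y p q =>
      lt2 (meas Tc i (Tm.enc x y)) (meas Tc i x) ∧
      lt2 (meas Tc i y) (meas Tc i x) ∧ GoodT Tc i p ∧ GoodT Tc i q
  | _, @PTree.encaE _ x y p q =>
      lt2 (meas Tc i (Tm.enca x y)) (meas Tc i x) ∧
      lt2 (meas Tc i (Tm.priv y)) (meas Tc i x) ∧ GoodT Tc i p ∧ GoodT Tc i q
  | _, @PTree.fstE _ x y p =>
      lt2 (meas Tc i (Tm.pair x y)) (meas Tc i x) ∧ GoodT Tc i p
  | _, @PTree.sndE _ x y p =>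
      lt2 (meas Tc i (Tm.pair x y)) (meas Tc i y) ∧ GoodT Tc i p

lemma GoodT.leaves {n : ℕ} (Tc : Fin n → Finset Tm) (i : Fin n)
    (hmono : ∀ i j : Fin n, i ≤ j → Tc i ⊆ Tc j) :
    ∀ {v : Tm} (π : PTree (Tc i) v), GoodT Tc i π →
      axLeaves π ⊆ ↑(Tc (mIdx Tc i v)) := by
  have key : ∀ {w v : Tm}, lt2 (meas Tc i w) (meas Tc i v) →
      (Tc (mIdx Tc i w) : Set Tm) ⊆ ↑(Tc (mIdx Tc i v)) := by
    intro w v h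
    have : (mIdx Tc i w : ℕ) ≤ (mIdx Tc i v : ℕ) := by
      rcases h with h | ⟨h, _⟩ <;> simp [meas] at h <;> omega
    exact_mod_cast Finset.coe_subset.2 (hmono _ _ (by exact_mod_cast this))
  intro v π
  induction π with
  | ax h => intro hg; simp only [axLeaves]; intro a ha; subst ha; exact_mod_cast hg
  | pairI p q ihp ihq =>
    intro hg
    simp only [GoodT] at hg
    simp only [axLeaves]
    exact Set.union_subset ((ihp hg.2.2.1).trans (key hg.1)) ((ihq hg.2.2.2).trans (key hg.2.1))
  | encI p q ihp ihq =>
    intro hg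
    simp only [GoodT] at hg
    simp only [axLeaves]
    exact Set.union_subset ((ihp hg.2.2.1).trans (key hg.1)) ((ihq hg.2.2.2).trans (key hg.2.1))
  | encaI p q ihp ihq =>
    intro hg
    simp only [GoodT] at hg
    simp only [axLeaves]
    exact Set.union_subset ((ihp hg.2.2.1).trans (key hg.1)) ((ihq hg.2.2.2).trans (key hg.2.1))
  | signI p q ihp ihq =>
    intro hg
    simp only [GoodT] at hg
    simp only [axLeaves]
    exact Set.union_subset ((ihp hg.2.2.1).trans (key hg.1)) ((ihq hg.2.2.2).trans (key hg.2.1))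
  | encE p q ihp ihq =>
    intro hg
    simp only [GoodT] at hg
    simp only [axLeaves]
    exact Set.union_subset ((ihp hg.2.2.1).trans (key hg.1)) ((ihq hg.2.2.2).trans (key hg.2.1))
  | encaE p q ihp ihq =>
    intro hg
    simp only [GoodT] at hg
    simp only [axLeaves]
    exact Set.union_subset ((ihp hg.2.2.1).trans (key hg.1)) ((ihq hg.2.2.2).trans (key hg.2.1))
  | fstE p ihp =>
    intro hg
    simp only [GoodT] at hg
    simp only [axLeaves]
    exact (ihp hg.2).trans (key hg.1)
  | sndE p ihp =>
    intro hg
    simp only [GoodT] at hg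
    simp only [axLeaves]
    exact (ihp hg.2).trans (key hg.1)

lemma child_good {n : ℕ} (Tc : Fin n → Finset Tm) (i : Fin n)
    {a b : Σ v : Tm, PTree (Tc i) v} (h : Child (Tc i) a b) (hg : GoodT Tc i b.2) :
    GoodT Tc i a.2 ∧ lt2 (meas Tc i a.1) (meas Tc i b.1) := by
  cases h <;> simp only [GoodT] at hg ⊢ <;>
    first
      | exact ⟨hg.2.2.1, hg.1⟩
      | exact ⟨hg.2.2.2, hg.2.1⟩
      | exact ⟨hg.2, hg.1⟩

lemma subproof_good {n : ℕ} (Tc : Fin n → Finset Tm) (i : Fin n)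
    {a b : Σ v : Tm, PTree (Tc i) v} (h : Subproof a b) (hg : GoodT Tc i b.2) :
    GoodT Tc i a.2 := by
  induction h using Relation.ReflTransGen.head_induction_on with
  | refl => exact hg
  | head hstep _ ih => exact (child_good Tc i hstep ih).1

lemma strict_good {n : ℕ} (Tc : Fin n → Finset Tm) (i : Fin n)
    {a b : Σ v : Tm, PTree (Tc i) v} (h : StrictSubproof a b) (hg : GoodT Tc i b.2) :
    lt2 (meas Tc i a.1) (meas Tc i b.1) := by
  induction h using Relation.TransGen.head_induction_on with
  | single hstep => exact (child_good Tc i hstep hg).2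
  | head hstep hrest ihm =>
      exact lt2_trans (child_good Tc i hstep
        (subproof_good Tc i hrest.to_reflTransGen hg)).2 ihm

lemma deduce_mono {T T' : Finset Tm} {u : Tm} (hs : T ⊆ T') (h : Deduce T u) :
    Deduce T' u := by
  induction h with
  | ax h => exact .ax (hs h)
  | pairI _ _ ih1 ih2 => exact .pairI ih1 ih2
  | encI _ _ ih1 ih2 => exact .encI ih1 ih2
  | encaI _ _ ih1 ih2 => exact .encaI ih1 ih2
  | signI _ _ ih1 ih2 => exact .signI ih1 ih2
  | encE _ _ ih1 ih2 => exact .encE ih1 ih2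
  | encaE _ _ ih1 ih2 => exact .encaE ih1 ih2
  | fstE _ ih => exact .fstE ih
  | sndE _ ih => exact .sndE ih

lemma build {n : ℕ} (Tc : Fin n → Finset Tm)
    (hmono : ∀ i j : Fin n, i ≤ j → Tc i ⊆ Tc j) (i : Fin n) :
    ∀ (a k : ℕ) (v : Tm), Deduce (Tc i) v → (mIdx Tc i v : ℕ) = a → msz Tc i v = k →
      ∃ π : PTree (Tc i) v, GoodT Tc i π := by
  intro a
  induction a using Nat.strong_induction_on with
  | _ a iha =>
  intro k
  induction k using Nat.strong_induction_on with
  | _ k ihk =>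
  intro v hv hma hmk
  have hmle : mIdx Tc i v ≤ i := mIdx_le Tc i hv
  have hsub : Tc (mIdx Tc i v) ⊆ Tc i := hmono _ _ hmle
  have hm : Deduce (Tc (mIdx Tc i v)) v := deduce_mIdx Tc i hv
  have hex : ∃ k, DN k (Tc (mIdx Tc i v)) v := deduce_dn hm
  have hdn : DN (msz Tc i v) (Tc (mIdx Tc i v)) v := by
    rw [msz, dif_pos hex]; exact Nat.find_spec hex
  have key : ∀ (k₁ : ℕ) (w : Tm), DN k₁ (Tc (mIdx Tc i v)) w → k₁ < msz Tc i v →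
      (∃ π : PTree (Tc i) w, GoodT Tc i π) ∧ lt2 (meas Tc i w) (meas Tc i v) := by
    intro k₁ w hw hlt
    have hdw : Deduce (Tc (mIdx Tc i v)) w := dn_deduce hw
    have hdi : Deduce (Tc i) w := deduce_mono hsub hdw
    have hle : mIdx Tc i w ≤ mIdx Tc i v := mIdx_le Tc i hdw
    have hmszw : mIdx Tc i w = mIdx Tc i v → msz Tc i w ≤ k₁ := by
      intro he
      have hex' : ∃ k, DN k (Tc (mIdx Tc i w)) w := ⟨k₁, by rw [he]; exact hw⟩
      rw [msz, dif_pos hex']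
      exact Nat.find_le (by rw [he]; exact hw)
    have hlt2 : lt2 (meas Tc i w) (meas Tc i v) := by
      rcases lt_or_eq_of_le hle with h | h
      · exact Or.inl (by exact_mod_cast h)
      · exact Or.inr ⟨by exact_mod_cast congrArg Fin.val h,
          lt_of_le_of_lt (hmszw h) hlt⟩
    refine ⟨?_, hlt2⟩
    rcases lt_or_eq_of_le hle with h | h
    · exact iha (mIdx Tc i w : ℕ) (by rw [← hma]; exact_mod_cast h)
        (msz Tc i w) w hdi rfl rfl
    · exact ihk (msz Tc i w) (by have := hmszw h; omega) w hdi
        (by rw [h, hma]) rfl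
  clear hm hex
  obtain ⟨K, M, hK, hM, hdn⟩ : ∃ K M, msz Tc i v = K ∧ Tc (mIdx Tc i v) = M ∧ DN K M v :=
    ⟨_, _, rfl, rfl, hdn⟩
  cases hdn with
  | ax h =>
      rw [← hM] at h
      exact ⟨.ax (hsub h), by simp only [GoodT]; exact h⟩
  | pairI hx hy =>
      rw [← hM] at hx hy
      obtain ⟨⟨πx, gx⟩, lx⟩ := key _ _ hx (by omega)
      obtain ⟨⟨πy, gy⟩, ly⟩ := key _ _ hy (by omega)
      exact ⟨.pairI πx πy, by simp only [GoodT]; exact ⟨lx, ly, gx, gy⟩⟩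
  | encI hx hy =>
      rw [← hM] at hx hy
      obtain ⟨⟨πx, gx⟩, lx⟩ := key _ _ hx (by omega)
      obtain ⟨⟨πy, gy⟩, ly⟩ := key _ _ hy (by omega)
      exact ⟨.encI πx πy, by simp only [GoodT]; exact ⟨lx, ly, gx, gy⟩⟩
  | encaI hx hy =>
      rw [← hM] at hx hy
      obtain ⟨⟨πx, gx⟩, lx⟩ := key _ _ hx (by omega)
      obtain ⟨⟨πy, gy⟩, ly⟩ := key _ _ hy (by omega)
      exact ⟨.encaI πx πy, by simp only [GoodT]; exact ⟨lx, ly, gx, gy⟩⟩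
  | signI hx hy =>
      rw [← hM] at hx hy
      obtain ⟨⟨πx, gx⟩, lx⟩ := key _ _ hx (by omega)
      obtain ⟨⟨πy, gy⟩, ly⟩ := key _ _ hy (by omega)
      exact ⟨.signI πx πy, by simp only [GoodT]; exact ⟨lx, ly, gx, gy⟩⟩
  | encE hx hy =>
      rw [← hM] at hx hy
      obtain ⟨⟨πx, gx⟩, lx⟩ := key _ _ hx (by omega)
      obtain ⟨⟨πy, gy⟩, ly⟩ := key _ _ hy (by omega)
      exact ⟨.encE πx πy, by simp only [GoodT]; exact ⟨lx, ly, gx, gy⟩⟩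
  | encaE hx hy =>
      rw [← hM] at hx hy
      obtain ⟨⟨πx, gx⟩, lx⟩ := key _ _ hx (by omega)
      obtain ⟨⟨πy, gy⟩, ly⟩ := key _ _ hy (by omega)
      exact ⟨.encaE πx πy, by simp only [GoodT]; exact ⟨lx, ly, gx, gy⟩⟩
  | fstE hx =>
      rw [← hM] at hx
      obtain ⟨⟨πx, gx⟩, lx⟩ := key _ _ hx (by omega)
      exact ⟨.fstE πx, by simp only [GoodT]; exact ⟨lx, gx⟩⟩
  | sndE hx =>
      rw [← hM] at hx
      obtain ⟨⟨πx, gx⟩, lx⟩ := key _ _ hx (by omega)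
      exact ⟨.sndE πx, by simp only [GoodT]; exact ⟨lx, gx⟩⟩

/-- given finite sets of terms `Tc 0 ⊆ ... ⊆ Tc (n-1)`, if there is a
proof of `Tc i ⊢ u` then there is a simple proof of it. -/
theorem exists_simple_proof {n : ℕ} (Tc : Fin n → Finset Tm)
    (hmono : ∀ i j : Fin n, i ≤ j → Tc i ⊆ Tc j) (i : Fin n) (u : Tm)
    (h : Deduce (Tc i) u) :
    ∃ π : PTree (Tc i) u, SimpleChain Tc i π := by
  obtain ⟨π, hg⟩ := build Tc hmono i _ _ u h rfl rfl
  refine ⟨π, ?_, ?_⟩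
  · intro a ha j hj hd
    have hga : GoodT Tc i a.2 := subproof_good Tc i ha hg
    have hl := GoodT.leaves Tc i hmono a.2 hga
    refine hl.trans ?_
    exact_mod_cast Finset.coe_subset.2 (hmono _ _ (mIdx_le Tc i hd))
  · intro a b ha hb he
    have hga : GoodT Tc i a.2 := subproof_good Tc i ha hg
    exact lt2_ne (strict_good Tc i hb hga) (congrArg (meas Tc i) he)
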